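/- Let X be a compact Hausdorff space and T : C(X) → C(X) a Markov operator satisfying: (1) there exists an open dense subset X_λ ⊆ X such that X_λ ∋ x ↦ T'δ_x is continuous for the total variation norm and T'δ_x is concentrated on X_λ for x ∈ X_λ; (2) there exists a T-invariant Radon probability measure λ concentrated on X_λ such that ‖T'^m ν − λ‖_TV → 0 for every probability measure ν concentrated on X_λ. Then for every open set V with X \ X_λ ⊆ V, one has lim_{m→∞} sup_{f ∈ C(X), ‖f‖ ≤ 1} sup_{x ∈ X \ V} |T^{m+1} f(x) − T^m f(x)| = 0. -/
import Mathlib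


open MeasureTheory Filter Set

/-- The total variation distance between two Borel measures on a compact space,
`‖μ − ν‖_TV = sup {|∫ f dμ − ∫ f dν| : f ∈ C(X), ‖f‖ ≤ 1}`. -/
noncomputable def tvDist {X : Type*} [TopologicalSpace X] [CompactSpace X]
    [MeasurableSpace X] (μ ν : Measure X) : ℝ :=
  sSup { r : ℝ | ∃ f : C(X, ℝ), ‖f‖ ≤ 1 ∧ r = |(∫ x, f x ∂μ) - ∫ x, f x ∂ν| }

section Aux

variable {X : Type*} [TopologicalSpace X] [CompactSpace X]
    [MeasurableSpace X] [OpensMeasurableSpace X]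

lemma aux_integrable (f : C(X, ℝ)) (μ : Measure X) [IsFiniteMeasure μ] :
    Integrable (fun x => f x) μ :=
  f.continuous.integrable_of_hasCompactSupport (HasCompactSupport.of_compactSpace f)

lemma aux_abs_integral_le (f : C(X, ℝ)) (μ : Measure X) [IsProbabilityMeasure μ]
    (hf : ‖f‖ ≤ 1) : |∫ x, f x ∂μ| ≤ 1 := by
  have := norm_integral_le_of_norm_le_const (μ := μ) (f := fun x => f x) (C := 1)
    (Filter.Eventually.of_forall fun x => (f.norm_coe_le_norm x).trans hf)
  simpa using this

lemma aux_bddAbove (μ ν : Measure X) [IsProbabilityMeasure μ] [IsProbabilityMeasure ν] :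
    BddAbove { r : ℝ | ∃ f : C(X, ℝ), ‖f‖ ≤ 1 ∧ r = |(∫ x, f x ∂μ) - ∫ x, f x ∂ν| } := by
  refine ⟨2, ?_⟩
  rintro r ⟨f, hf, rfl⟩
  calc |(∫ x, f x ∂μ) - ∫ x, f x ∂ν| ≤ |∫ x, f x ∂μ| + |∫ x, f x ∂ν| := abs_sub _ _
    _ ≤ 1 + 1 := add_le_add (aux_abs_integral_le f μ hf) (aux_abs_integral_le f ν hf)
    _ = 2 := by norm_num

lemma le_tvDist (μ ν : Measure X) [IsProbabilityMeasure μ] [IsProbabilityMeasure ν]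
    (f : C(X, ℝ)) (hf : ‖f‖ ≤ 1) :
    |(∫ x, f x ∂μ) - ∫ x, f x ∂ν| ≤ tvDist μ ν :=
  le_csSup (aux_bddAbove μ ν) ⟨f, hf, rfl⟩

lemma tvDist_le (μ ν : Measure X) {c : ℝ}
    (h : ∀ f : C(X, ℝ), ‖f‖ ≤ 1 → |(∫ x, f x ∂μ) - ∫ x, f x ∂ν| ≤ c) :
    tvDist μ ν ≤ c := by
  refine csSup_le ⟨0, 0, by simp⟩ ?_
  rintro r ⟨f, hf, rfl⟩
  exact h f hf

lemma tvDist_triangle (μ κ ν : Measure X) [IsProbabilityMeasure μ]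
    [IsProbabilityMeasure κ] [IsProbabilityMeasure ν] :
    tvDist μ ν ≤ tvDist μ κ + tvDist κ ν := by
  refine tvDist_le μ ν fun f hf => ?_
  calc |(∫ x, f x ∂μ) - ∫ x, f x ∂ν|
      ≤ |(∫ x, f x ∂μ) - ∫ x, f x ∂κ| + |(∫ x, f x ∂κ) - ∫ x, f x ∂ν| :=
        abs_sub_le _ _ _
    _ ≤ tvDist μ κ + tvDist κ ν :=
        add_le_add (le_tvDist μ κ f hf) (le_tvDist κ ν f hf)

lemma tvDist_comm (μ ν : Measure X) : tvDist μ ν = tvDist ν μ := by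
  unfold tvDist
  congr 1
  ext r
  constructor <;> rintro ⟨f, hf, rfl⟩ <;> exact ⟨f, hf, (abs_sub_comm _ _)⟩

end Aux

/-- For a Markov operator `T` on `C(X)` (`X` compact Hausdorff) satisfying conditions
(1) and (2), for every open `V ⊇ X \ X_λ` one has
`lim_m sup_{‖f‖≤1} sup_{x ∈ X\V} |T^{m+1}f(x) − T^m f(x)| = 0`. -/
theorem markov_difference_uniformly_small_off_boundary
    {X : Type*} [TopologicalSpace X] [CompactSpace X] [T2Space X]
    [MeasurableSpace X] [BorelSpace X]
    -- `T` is a Markov operator on `C(X)`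
    (T : C(X, ℝ) →L[ℝ] C(X, ℝ))
    (hT1 : T 1 = 1)
    (hTpos : ∀ f : C(X, ℝ), 0 ≤ f → 0 ≤ T f)
    -- `T'` is its dual, acting on Borel measures
    (T' : Measure X → Measure X)
    (hdual : ∀ (ν : Measure X) (f : C(X, ℝ)), (∫ x, (T f) x ∂ν) = ∫ x, f x ∂(T' ν))
    (hprob : ∀ ν : Measure X, IsProbabilityMeasure ν → IsProbabilityMeasure (T' ν))
    -- the open dense set `X_λ`
    (Xl : Set X) (hXlopen : IsOpen Xl) (hXldense : Dense Xl)
    -- (1) `x ↦ T'δ_x` maps `X_λ` to `P(X_λ)` and is continuous in total variation on `X_λ`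
    (h1conc : ∀ x ∈ Xl, T' (Measure.dirac x) Xlᶜ = 0)
    (h1cont : ∀ x ∈ Xl, ∀ ε > 0, ∃ U : Set X, IsOpen U ∧ x ∈ U ∧
      ∀ y ∈ U ∩ Xl, tvDist (T' (Measure.dirac y)) (T' (Measure.dirac x)) < ε)
    -- (2) the `T`-invariant Radon probability `λ` concentrated on `X_λ`
    (lam : Measure X) (hlamprob : IsProbabilityMeasure lam) (hlamRadon : lam.Regular)
    (hlamconc : lam Xlᶜ = 0)
    (hlaminv : T' lam = lam)
    (h2conv : ∀ ν : Measure X, IsProbabilityMeasure ν → ν Xlᶜ = 0 →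
      Tendsto (fun m => tvDist (T'^[m] ν) lam) atTop (nhds 0)) :
    ∀ V : Set X, IsOpen V → Xlᶜ ⊆ V →
      ∀ ε > 0, ∃ M : ℕ, ∀ m ≥ M, ∀ f : C(X, ℝ), ‖f‖ ≤ 1 →
        ∀ x ∈ Vᶜ, |((T ^ (m+1)) f) x - ((T ^ m) f) x| ≤ ε := by
  -- `T` is a contraction on `C(X)`
  have hTnorm : ∀ f : C(X, ℝ), ‖T f‖ ≤ ‖f‖ := by
    intro f
    rw [ContinuousMap.norm_le _ (norm_nonneg f)]
    intro x
    have h1 : (0 : C(X, ℝ)) ≤ T (‖f‖ • 1 - f) := by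
      refine hTpos _ ?_
      rw [ContinuousMap.le_def]
      intro y
      simp only [ContinuousMap.sub_apply, ContinuousMap.smul_apply, ContinuousMap.one_apply,
        ContinuousMap.zero_apply, smul_eq_mul, mul_one]
      have := f.norm_coe_le_norm y
      rw [Real.norm_eq_abs] at this
      linarith [(abs_le.mp this).2]
    have h2 : (0 : C(X, ℝ)) ≤ T (‖f‖ • 1 + f) := by
      refine hTpos _ ?_
      rw [ContinuousMap.le_def]
      intro y
      simp only [ContinuousMap.add_apply, ContinuousMap.smul_apply, ContinuousMap.one_apply,
        ContinuousMap.zero_apply, smul_eq_mul, mul_one]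
      have := f.norm_coe_le_norm y
      rw [Real.norm_eq_abs] at this
      linarith [(abs_le.mp this).1]
    rw [map_sub, T.map_smul, hT1] at h1
    rw [map_add, T.map_smul, hT1] at h2
    rw [ContinuousMap.le_def] at h1 h2
    have h1x := h1 x
    have h2x := h2 x
    simp only [ContinuousMap.sub_apply, ContinuousMap.add_apply, ContinuousMap.smul_apply,
      ContinuousMap.one_apply, ContinuousMap.zero_apply, smul_eq_mul, mul_one] at h1x h2x
    rw [Real.norm_eq_abs, abs_le]
    constructor <;> linarith
  -- iterates of `T'` on probability measures are probability measures
  have hiterprob : ∀ (ν : Measure X), IsProbabilityMeasure ν → ∀ m,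
      IsProbabilityMeasure (T'^[m] ν) := by
    intro ν hν m
    induction m with
    | zero => simpa using hν
    | succ m ih => rw [Function.iterate_succ_apply']; exact hprob _ ih
  -- `T'` is a contraction in total variation on probability measures
  have hcontr : ∀ μ ν : Measure X, IsProbabilityMeasure μ → IsProbabilityMeasure ν →
      tvDist (T' μ) (T' ν) ≤ tvDist μ ν := by
    intro μ ν hμ hν
    haveI := hμ; haveI := hν
    refine tvDist_le _ _ fun f hf => ?_
    rw [← hdual μ f, ← hdual ν f]
    exact le_tvDist μ ν (T f) ((hTnorm f).trans hf)
  -- iterated contraction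
  have hcontrIter : ∀ (k : ℕ) (μ ν : Measure X), IsProbabilityMeasure μ →
      IsProbabilityMeasure ν → tvDist (T'^[k] μ) (T'^[k] ν) ≤ tvDist μ ν := by
    intro k
    induction k with
    | zero => intro μ ν _ _; simp
    | succ k ih =>
        intro μ ν hμ hν
        rw [Function.iterate_succ_apply', Function.iterate_succ_apply']
        exact (hcontr _ _ (hiterprob μ hμ k) (hiterprob ν hν k)).trans (ih μ ν hμ hν)
  haveI := hlamprob
  -- the distance functions `g m x`
  set g : ℕ → X → ℝ := fun m x => tvDist (T'^[m] (Measure.dirac x)) lam with hg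
  have hdiracprob : ∀ x : X, IsProbabilityMeasure (Measure.dirac x) := fun x =>
    inferInstance
  have hgmono : ∀ x : X, ∀ k m : ℕ, k ≤ m → g m x ≤ g k x := by
    intro x k m hkm
    have hstep : ∀ n : ℕ, g (n + 1) x ≤ g n x := by
      intro n
      have : g (n + 1) x = tvDist (T' (T'^[n] (Measure.dirac x))) (T' lam) := by
        rw [hg]
        simp only
        rw [Function.iterate_succ_apply', hlaminv]
      rw [this]
      exact hcontr _ _ (hiterprob _ (hdiracprob x) n) hlamprob
    have : Antitone fun n => g n x := antitone_nat_of_succ_le hstep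
    exact this hkm
  -- representation of `(T^m f) x` as an integral
  have hrepr : ∀ (m : ℕ) (f : C(X, ℝ)) (x : X),
      ((T ^ m) f) x = ∫ y, f y ∂(T'^[m] (Measure.dirac x)) := by
    intro m
    induction m with
    | zero =>
        intro f x
        simp [MeasureTheory.integral_dirac' _ _ f.continuous.stronglyMeasurable]
    | succ m ih =>
        intro f x
        have h1 : (T ^ (m + 1)) f = (T ^ m) (T f) := by
          rw [pow_succ]; rfl
        rw [h1, ih (T f) x, hdual, Function.iterate_succ_apply' T' m (Measure.dirac x)]
  -- main estimate
  intro V hVopen hVsub ε hε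
  have hVcXl : Vᶜ ⊆ Xl := fun x hx => by
    by_contra h
    exact hx (hVsub h)
  have hVccomp : IsCompact (Vᶜ) := hVopen.isClosed_compl.isCompact
  -- for each point of `Vᶜ` choose data
  have hdata : ∀ x : X, x ∈ Vᶜ → ∃ (U : Set X) (n : ℕ), IsOpen U ∧ x ∈ U ∧
      g n x < ε / 4 ∧ ∀ y ∈ U ∩ Xl, tvDist (T' (Measure.dirac y)) (T' (Measure.dirac x)) < ε / 4 := by
    intro x hx
    have hxXl : x ∈ Xl := hVcXl hx
    have hd0 : (Measure.dirac x) Xlᶜ = 0 := by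
      rw [Measure.dirac_apply' _ hXlopen.isClosed_compl.measurableSet]
      simp [hxXl]
    have hconv := h2conv (Measure.dirac x) (hdiracprob x) hd0
    have hev : ∀ᶠ m in atTop, g m x < ε / 4 := by
      have := hconv.eventually (eventually_lt_nhds (by linarith : (0:ℝ) < ε / 4))
      simpa [hg] using this
    obtain ⟨n, hn⟩ := hev.exists
    obtain ⟨U, hUopen, hxU, hU⟩ := h1cont x hxXl (ε / 4) (by linarith)
    exact ⟨U, n, hUopen, hxU, hn, hU⟩
  choose! U n hUopen hxU hgn hUcont using hdata
  -- compactness: finite subcover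
  have hcover : Vᶜ ⊆ ⋃ x : ↥(Vᶜ), U x := by
    intro y hy
    exact mem_iUnion.2 ⟨⟨y, hy⟩, hxU y hy⟩
  obtain ⟨t, ht⟩ := hVccomp.elim_finite_subcover (fun x : ↥(Vᶜ) => U x)
    (fun x => hUopen x x.2) hcover
  refine ⟨(t.sup fun x : ↥(Vᶜ) => n x) + 1, ?_⟩
  -- the key uniform bound: for `m ≥ M`, `g m y ≤ ε/2` for all `y ∈ Vᶜ`
  have hkey : ∀ m ≥ (t.sup fun x : ↥(Vᶜ) => n x) + 1, ∀ y ∈ Vᶜ, g m y ≤ ε / 2 := by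
    intro m hm y hy
    obtain ⟨x, hxt, hyU⟩ := mem_iUnion₂.1 (ht hy)
    have hyXl : y ∈ Xl := hVcXl hy
    have hnx : n x ≤ m - 1 := by
      have h1 : n x ≤ t.sup fun x : ↥(Vᶜ) => n x := Finset.le_sup (f := fun x : ↥(Vᶜ) => n ↑x) hxt
      omega
    have hm1 : 1 ≤ m := by omega
    set k : ℕ := max (n x) 1 with hk
    have hkm : k ≤ m := by
      rw [hk]
      have h1 : n x ≤ t.sup fun x : ↥(Vᶜ) => n x := Finset.le_sup (f := fun x : ↥(Vᶜ) => n ↑x) hxt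
      omega
    have hmono := hgmono y k m hkm
    -- g k y ≤ g k x + tvDist (T'^[k] δ_y) (T'^[k] δ_x)
    have htri : g k y ≤ tvDist (T'^[k] (Measure.dirac y)) (T'^[k] (Measure.dirac x)) + g k x := by
      haveI := hiterprob _ (hdiracprob y) k
      haveI := hiterprob _ (hdiracprob (x : X)) k
      exact tvDist_triangle _ _ _
    -- distance of iterates bounded by distance after one step
    have hdist : tvDist (T'^[k] (Measure.dirac y)) (T'^[k] (Measure.dirac (x : X)))
        ≤ tvDist (T' (Measure.dirac y)) (T' (Measure.dirac (x : X))) := by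
      obtain ⟨j, hj⟩ : ∃ j, k = j + 1 := ⟨k - 1, by omega⟩
      rw [hj, Function.iterate_succ_apply, Function.iterate_succ_apply]
      exact hcontrIter j _ _ (hprob _ (hdiracprob y)) (hprob _ (hdiracprob (x : X)))
    have hgkx : g k x ≤ g (n x) x := hgmono (x : X) (n x) k (le_max_left _ _)
    have h1 : tvDist (T' (Measure.dirac y)) (T' (Measure.dirac (x : X))) < ε / 4 :=
      hUcont (x : X) x.2 y ⟨hyU, hyXl⟩
    have h2 : g (n x) x < ε / 4 := hgn (x : X) x.2
    linarith
  intro m hm f hf x hx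
  -- the pointwise bound via tvDist
  have hb1 : g (m + 1) x ≤ ε / 2 := hkey (m + 1) (by omega) x hx
  have hb2 : g m x ≤ ε / 2 := hkey m hm x hx
  haveI := hiterprob _ (hdiracprob x) (m + 1)
  haveI := hiterprob _ (hdiracprob x) m
  have hcalc : |((T ^ (m+1)) f) x - ((T ^ m) f) x| ≤ g (m + 1) x + g m x := by
    rw [hrepr (m + 1) f x, hrepr m f x]
    calc |(∫ y, f y ∂(T'^[m+1] (Measure.dirac x))) - ∫ y, f y ∂(T'^[m] (Measure.dirac x))|
        ≤ |(∫ y, f y ∂(T'^[m+1] (Measure.dirac x))) - ∫ y, f y ∂lam|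
          + |(∫ y, f y ∂lam) - ∫ y, f y ∂(T'^[m] (Measure.dirac x))| := abs_sub_le _ _ _
      _ ≤ g (m + 1) x + g m x := by
          refine add_le_add (le_tvDist _ _ f hf) ?_
          rw [hg]
          simp only
          rw [tvDist_comm]
          exact le_tvDist _ _ f hf
  linarith
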